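/- Let d be a power of 2, let F be a symmetric m×m real matrix, let A' ⊆ A ⊆ [m] with A' nonempty, let Δ_A = I_A − (1/|A|)·𝟙_A·𝟙_Aᵀ and Δ_{A'} = I_{A'} − (1/|A'|)·𝟙_{A'}·𝟙_{A'}ᵀ, and let N be a symmetric doubly stochastic m×m matrix such that N_{ij} = 0 whenever exactly one of i, j belongs to A'. Then tr((Δ_{A'}·N·F·N·Δ_{A'})^(2d)) ≤ tr(Δ_{A'}·N^(4d)·(Δ_A·F·Δ_A)^(2d)). -/
import Mathlib


open Matrix

section TraceHelpers

variable {n : Type*} [Fintype n] [DecidableEq n]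

lemma trace_mul_le_avg (P Q : Matrix n n ℝ) :
    trace (P * Q) ≤ (trace (P * Pᵀ) + trace (Q * Qᵀ)) / 2 := by
  have h1 : trace (P * Q) = ∑ i, ∑ j, P i j * Q j i := by
    simp [Matrix.trace, Matrix.diag, Matrix.mul_apply]
  have h2 : trace (P * Pᵀ) = ∑ i, ∑ j, P i j * P i j := by
    simp [Matrix.trace, Matrix.diag, Matrix.mul_apply]
  have h3 : trace (Q * Qᵀ) = ∑ i, ∑ j, Q j i * Q j i := by
    simp [Matrix.trace, Matrix.diag, Matrix.mul_apply]
    exact Finset.sum_comm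
  rw [h1, h2, h3, ← Finset.sum_add_distrib, Finset.sum_div]
  apply Finset.sum_le_sum
  intro i _
  rw [← Finset.sum_add_distrib, Finset.sum_div]
  apply Finset.sum_le_sum
  intro j _
  nlinarith [sq_nonneg (P i j - Q j i)]

lemma trace_pow_mul_comm (U V : Matrix n n ℝ) (q : ℕ) :
    trace ((U * V) ^ q) = trace ((V * U) ^ q) := by
  cases q with
  | zero => simp
  | succ q =>
    have hsc : SemiconjBy U (V * U) (U * V) := by
      unfold SemiconjBy; rw [mul_assoc]
    have h := (hsc.pow_right q).eq
    calc trace ((U * V) ^ (q + 1)) = trace (((U * V) ^ q * U) * V) := by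
          rw [pow_succ, mul_assoc]
      _ = trace (V * ((U * V) ^ q * U)) := trace_mul_comm _ _
      _ = trace (V * (U * (V * U) ^ q)) := by rw [h]
      _ = trace ((V * U) ^ (q + 1)) := by rw [pow_succ', ← mul_assoc]

lemma traceKL (k : ℕ) :
    (∀ A B : Matrix n n ℝ, Aᵀ = A → Bᵀ = B →
      trace ((A * B) ^ (2 ^ k)) ≤ trace (A ^ (2 ^ k) * B ^ (2 ^ k)))
    ∧ (∀ C : Matrix n n ℝ,
      trace (C ^ (2 ^ (k + 1))) ≤ trace ((C * Cᵀ) ^ (2 ^ k))) := by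
  induction k with
  | zero =>
    constructor
    · intro A B _ _; simp
    · intro C
      have h := trace_mul_le_avg C C
      simpa [pow_two] using h.trans_eq (by ring)
  | succ k ih =>
    obtain ⟨ihL, ihK⟩ := ih
    have hL : ∀ A B : Matrix n n ℝ, Aᵀ = A → Bᵀ = B →
        trace ((A * B) ^ (2 ^ (k + 1))) ≤ trace (A ^ (2 ^ (k + 1)) * B ^ (2 ^ (k + 1))) := by
      intro A B hA hB
      have e1 : trace ((A * B) ^ (2 ^ (k + 1))) ≤ trace (((A * B) * (A * B)ᵀ) ^ (2 ^ k)) :=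
        ihK (A * B)
      have e2 : (A * B) * (A * B)ᵀ = A * (B * B * A) := by
        rw [transpose_mul, hA, hB]; noncomm_ring
      have e3 : trace ((A * (B * B * A)) ^ (2 ^ k)) = trace (((A * A) * (B * B)) ^ (2 ^ k)) := by
        rw [trace_pow_mul_comm A (B * B * A)]
        rw [show (B * B * A) * A = (B * B) * (A * A) by noncomm_ring]
        rw [trace_pow_mul_comm (B * B) (A * A)]
      have e4 : trace (((A * A) * (B * B)) ^ (2 ^ k))
          ≤ trace ((A * A) ^ (2 ^ k) * (B * B) ^ (2 ^ k)) :=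
        ihL (A * A) (B * B) (by rw [transpose_mul, hA]) (by rw [transpose_mul, hB])
      have e5 : (A * A) ^ (2 ^ k) = A ^ (2 ^ (k + 1)) := by
        rw [← pow_two, ← pow_mul, pow_succ']
      have e6 : (B * B) ^ (2 ^ k) = B ^ (2 ^ (k + 1)) := by
        rw [← pow_two, ← pow_mul, pow_succ']
      calc trace ((A * B) ^ (2 ^ (k + 1))) ≤ trace (((A * B) * (A * B)ᵀ) ^ (2 ^ k)) := e1
        _ = trace (((A * A) * (B * B)) ^ (2 ^ k)) := by rw [e2, e3]
        _ ≤ trace ((A * A) ^ (2 ^ k) * (B * B) ^ (2 ^ k)) := e4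
        _ = trace (A ^ (2 ^ (k + 1)) * B ^ (2 ^ (k + 1))) := by rw [e5, e6]
    refine ⟨hL, ?_⟩
    intro C
    have e1 : trace (C ^ (2 ^ (k + 2))) = trace ((C * C) ^ (2 ^ (k + 1))) := by
      rw [← pow_two, ← pow_mul, ← pow_succ']
    have e2 : trace ((C * C) ^ (2 ^ (k + 1))) ≤ trace (((C * C) * (C * C)ᵀ) ^ (2 ^ k)) :=
      ihK (C * C)
    have e3 : trace (((C * C) * (C * C)ᵀ) ^ (2 ^ k))
        = trace (((Cᵀ * C) * (C * Cᵀ)) ^ (2 ^ k)) := by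
      rw [transpose_mul]
      rw [show (C * C) * (Cᵀ * Cᵀ) = (C * C * Cᵀ) * Cᵀ by noncomm_ring]
      rw [trace_pow_mul_comm (C * C * Cᵀ) Cᵀ]
      rw [show Cᵀ * (C * C * Cᵀ) = (Cᵀ * C) * (C * Cᵀ) by noncomm_ring]
    have e4 : trace (((Cᵀ * C) * (C * Cᵀ)) ^ (2 ^ k))
        ≤ trace ((Cᵀ * C) ^ (2 ^ k) * (C * Cᵀ) ^ (2 ^ k)) :=
      ihL (Cᵀ * C) (C * Cᵀ) (by rw [transpose_mul, transpose_transpose])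
        (by rw [transpose_mul, transpose_transpose])
    have hsymP : ((Cᵀ * C) ^ (2 ^ k))ᵀ = (Cᵀ * C) ^ (2 ^ k) := by
      rw [transpose_pow, transpose_mul, transpose_transpose]
    have hsymQ : ((C * Cᵀ) ^ (2 ^ k))ᵀ = (C * Cᵀ) ^ (2 ^ k) := by
      rw [transpose_pow, transpose_mul, transpose_transpose]
    have e5 : trace ((Cᵀ * C) ^ (2 ^ k) * (C * Cᵀ) ^ (2 ^ k))
        ≤ (trace ((Cᵀ * C) ^ (2 ^ (k + 1))) + trace ((C * Cᵀ) ^ (2 ^ (k + 1)))) / 2 := by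
      have h := trace_mul_le_avg ((Cᵀ * C) ^ (2 ^ k)) ((C * Cᵀ) ^ (2 ^ k))
      rw [hsymP, hsymQ, ← pow_add] at h
      rw [show 2 ^ k + 2 ^ k = 2 ^ (k + 1) by rw [pow_succ]; omega] at h
      have h2 : (C * Cᵀ) ^ (2 ^ k) * (C * Cᵀ) ^ (2 ^ k) = (C * Cᵀ) ^ (2 ^ (k + 1)) := by
        rw [← pow_add, show 2 ^ k + 2 ^ k = 2 ^ (k + 1) by rw [pow_succ]; omega]
      rw [h2] at h
      exact h
    have e6 : trace ((Cᵀ * C) ^ (2 ^ (k + 1))) = trace ((C * Cᵀ) ^ (2 ^ (k + 1))) :=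
      trace_pow_mul_comm Cᵀ C _
    calc trace (C ^ (2 ^ (k + 2))) = trace ((C * C) ^ (2 ^ (k + 1))) := e1
      _ ≤ trace (((C * C) * (C * C)ᵀ) ^ (2 ^ k)) := e2
      _ = trace (((Cᵀ * C) * (C * Cᵀ)) ^ (2 ^ k)) := e3
      _ ≤ trace ((Cᵀ * C) ^ (2 ^ k) * (C * Cᵀ) ^ (2 ^ k)) := e4
      _ ≤ (trace ((Cᵀ * C) ^ (2 ^ (k + 1))) + trace ((C * Cᵀ) ^ (2 ^ (k + 1)))) / 2 := e5
      _ = trace ((C * Cᵀ) ^ (2 ^ (k + 1))) := by rw [e6]; ring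

end TraceHelpers

/-- The `m × m` matrix `Δ_B = I_B − (1/|B|)·𝟙_B 𝟙_Bᵀ` for a subset `B ⊆ [m]`. -/
noncomputable def DeltaA (m : ℕ) (B : Finset (Fin m)) : Matrix (Fin m) (Fin m) ℝ :=
  Matrix.diagonal (fun i => if i ∈ B then (1 : ℝ) else 0)
    - ((B.card : ℝ)⁻¹) • Matrix.vecMulVec (fun i => if i ∈ B then (1 : ℝ) else 0)
        (fun i => if i ∈ B then (1 : ℝ) else 0)

lemma DeltaA_transpose (m : ℕ) (B : Finset (Fin m)) : (DeltaA m B)ᵀ = DeltaA m B := by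
  unfold DeltaA
  rw [transpose_sub, transpose_smul, diagonal_transpose]
  congr 1
  ext i j
  simp [Matrix.vecMulVec_apply, Matrix.transpose_apply, mul_comm]

/-- For `d` a power of two, `F` symmetric, `A' ⊆ A ⊆ [m]` with `A'` nonempty, and
`N` symmetric doubly stochastic vanishing on entries with exactly one index in `A'`,
`tr((Δ_{A'}·N·F·N·Δ_{A'})^(2d)) ≤ tr(Δ_{A'}·N^(4d)·(Δ_A·F·Δ_A)^(2d))`. -/
theorem stmt_19 (m : ℕ) (d : ℕ) (hd : ∃ j : ℕ, d = 2 ^ j)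
    (F : Matrix (Fin m) (Fin m) ℝ) (hF : F.IsSymm)
    (A' A : Finset (Fin m)) (hsub : A' ⊆ A) (hne : A'.Nonempty)
    (N : Matrix (Fin m) (Fin m) ℝ) (hNsym : N.IsSymm)
    (hNnn : ∀ i j, 0 ≤ N i j) (hNrow : ∀ i, ∑ j, N i j = 1) (hNcol : ∀ j, ∑ i, N i j = 1)
    (hNzero : ∀ i j, (i ∈ A' ∧ j ∉ A') ∨ (i ∉ A' ∧ j ∈ A') → N i j = 0) :
    Matrix.trace ((DeltaA m A' * N * F * N * DeltaA m A') ^ (2 * d))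
      ≤ Matrix.trace (DeltaA m A' * N ^ (4 * d) * (DeltaA m A * F * DeltaA m A) ^ (2 * d)) := by
  obtain ⟨j, rfl⟩ := hd
  set P := DeltaA m A' with hPdef
  set D := DeltaA m A with hDdef
  set u' : Fin m → ℝ := fun i => if i ∈ A' then 1 else 0 with hu'
  set u : Fin m → ℝ := fun i => if i ∈ A then 1 else 0 with hu
  set c' : ℝ := (A'.card : ℝ)⁻¹ with hc'
  set c : ℝ := (A.card : ℝ)⁻¹ with hc
  set V' : Matrix (Fin m) (Fin m) ℝ := Matrix.vecMulVec u' u' with hV'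
  set V : Matrix (Fin m) (Fin m) ℝ := Matrix.vecMulVec u u with hV
  set Vc : Matrix (Fin m) (Fin m) ℝ := Matrix.vecMulVec u' u with hVc
  have hNt : Nᵀ = N := hNsym.eq
  have hcard' : (A'.card : ℝ) ≠ 0 := Nat.cast_ne_zero.mpr hne.card_pos.ne'
  have hP : P = Matrix.diagonal u' - c' • V' := by rw [hPdef]; rfl
  have hD : D = Matrix.diagonal u - c • V := by rw [hDdef]; rfl
  have s1 : ∑ k, u' k = (A'.card : ℝ) := by
    simp [hu', Finset.sum_ite_mem, Finset.univ_inter]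
  have m1 : Matrix.diagonal u' * Matrix.diagonal u' = Matrix.diagonal u' := by
    rw [Matrix.diagonal_mul_diagonal]
    have hfun : (fun i => u' i * u' i) = u' := by
      funext i; by_cases h : i ∈ A' <;> simp [hu', h]
    rw [hfun]
  have m2 : Matrix.diagonal u' * V' = V' := by
    ext i j
    rw [Matrix.diagonal_mul]
    by_cases h : i ∈ A' <;> simp [hV', Matrix.vecMulVec_apply, hu', h]
  have m3 : V' * Matrix.diagonal u' = V' := by
    ext i j
    rw [Matrix.mul_diagonal]
    by_cases h : j ∈ A' <;> simp [hV', Matrix.vecMulVec_apply, hu', h]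
  have m4 : V' * V' = (A'.card : ℝ) • V' := by
    ext i j
    simp only [Matrix.mul_apply, hV', Matrix.vecMulVec_apply, Matrix.smul_apply, smul_eq_mul]
    have e : ∀ k, (u' i * u' k) * (u' k * u' j) = (u' i * u' j) * u' k := by
      intro k; by_cases h : k ∈ A' <;> simp [hu', h] <;> ring
    rw [Finset.sum_congr rfl (fun k _ => e k), ← Finset.mul_sum, s1]; ring
  have m5 : Matrix.diagonal u' * Matrix.diagonal u = Matrix.diagonal u' := by
    rw [Matrix.diagonal_mul_diagonal]
    have hfun : (fun i => u' i * u i) = u' := by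
      funext i
      by_cases h : i ∈ A'
      · simp [hu', hu, h, hsub h]
      · simp [hu', h]
    rw [hfun]
  have m6 : Matrix.diagonal u' * V = Vc := by
    ext i j
    rw [Matrix.diagonal_mul]
    by_cases h : i ∈ A'
    · simp [hV, hVc, Matrix.vecMulVec_apply, hu', hu, h, hsub h]
    · simp [hV, hVc, Matrix.vecMulVec_apply, hu', h]
  have m7 : V' * Matrix.diagonal u = V' := by
    ext i j
    rw [Matrix.mul_diagonal]
    by_cases h : j ∈ A'
    · simp [hV', Matrix.vecMulVec_apply, hu', hu, h, hsub h]
    · simp [hV', Matrix.vecMulVec_apply, hu', h]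
  have m8 : V' * V = (A'.card : ℝ) • Vc := by
    ext i j
    simp only [Matrix.mul_apply, hV', hV, hVc, Matrix.vecMulVec_apply, Matrix.smul_apply,
      smul_eq_mul]
    have e : ∀ k, (u' i * u' k) * (u k * u j) = (u' i * u j) * u' k := by
      intro k; by_cases h : k ∈ A'
      · simp [hu', hu, h, hsub h]
      · simp [hu', h]
    rw [Finset.sum_congr rfl (fun k _ => e k), ← Finset.mul_sum, s1]; ring
  have n1 : N * Matrix.diagonal u' = Matrix.diagonal u' * N := by
    ext i j
    rw [Matrix.mul_diagonal, Matrix.diagonal_mul]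
    by_cases hi : i ∈ A' <;> by_cases hj : j ∈ A'
    · simp [hu', hi, hj, mul_comm]
    · rw [hNzero i j (Or.inl ⟨hi, hj⟩)]; simp [hu', hi, hj]
    · rw [hNzero i j (Or.inr ⟨hi, hj⟩)]; simp
    · simp [hu', hi, hj]
  have hrow' : ∀ i, ∑ k, N i k * u' k = u' i := by
    intro i
    by_cases hi : i ∈ A'
    · have e : ∀ k, N i k * u' k = N i k := by
        intro k; by_cases hk : k ∈ A'
        · simp [hu', hk]
        · simp [hu', hk, hNzero i k (Or.inl ⟨hi, hk⟩)]
      rw [Finset.sum_congr rfl (fun k _ => e k), hNrow i]; simp [hu', hi]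
    · have e : ∀ k, N i k * u' k = 0 := by
        intro k; by_cases hk : k ∈ A'
        · simp [hNzero i k (Or.inr ⟨hi, hk⟩)]
        · simp [hu', hk]
      rw [Finset.sum_congr rfl (fun k _ => e k)]; simp [hu', hi]
  have n2 : N * V' = V' := by
    ext i j
    rw [Matrix.mul_apply]
    simp only [hV', Matrix.vecMulVec_apply]
    calc ∑ k, N i k * (u' k * u' j) = (∑ k, N i k * u' k) * u' j := by
          rw [Finset.sum_mul]; exact Finset.sum_congr rfl (fun k _ => by ring)
      _ = u' i * u' j := by rw [hrow' i]
  have hV't : V'ᵀ = V' := by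
    ext i j; simp [hV', Matrix.vecMulVec_apply, Matrix.transpose_apply, mul_comm]
  have n3 : V' * N = V' := by
    have h := congrArg Matrix.transpose n2
    rwa [Matrix.transpose_mul, hV't, hNt] at h
  have hPt : Pᵀ = P := by rw [hPdef]; exact DeltaA_transpose m A'
  have hDt : Dᵀ = D := by rw [hDdef]; exact DeltaA_transpose m A
  have hone : c' * (A'.card : ℝ) = 1 := by rw [hc']; exact inv_mul_cancel₀ hcard'
  have hPP : P * P = P := by
    rw [hP]
    simp only [sub_mul, mul_sub, smul_mul_assoc, mul_smul_comm, m1, m2, m3, m4, smul_smul]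
    rw [hone, one_smul, sub_self, smul_zero, sub_zero]
  have hPD : P * D = P := by
    rw [hP, hD]
    simp only [sub_mul, mul_sub, smul_mul_assoc, mul_smul_comm, m5, m6, m7, m8, smul_smul]
    rw [hone, one_smul, sub_self, smul_zero, sub_zero]
  have hDP : D * P = P := by
    have h := congrArg Matrix.transpose hPD
    rwa [Matrix.transpose_mul, hPt, hDt] at h
  have hPN : N * P = P * N := by
    rw [hP, mul_sub, sub_mul, mul_smul_comm, smul_mul_assoc, n1, n2, n3]
  have hGt : (D * F * D)ᵀ = D * F * D := by
    rw [transpose_mul, transpose_mul, hDt, hF.eq, ← mul_assoc]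
  have hPNN : (N * N) * P = P * (N * N) := by
    calc (N * N) * P = N * (N * P) := by rw [mul_assoc]
      _ = N * (P * N) := by rw [hPN]
      _ = (N * P) * N := by rw [mul_assoc]
      _ = (P * N) * N := by rw [hPN]
      _ = P * (N * N) := by rw [mul_assoc]
  have hXt : (P * (N * N))ᵀ = P * (N * N) := by
    rw [transpose_mul, transpose_mul, hNt, hPt]
    exact hPNN
  have hQD : (P * N) * D = P * N := by
    calc (P * N) * D = (N * P) * D := by rw [hPN]
      _ = N * (P * D) := by rw [mul_assoc]
      _ = N * P := by rw [hPD]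
      _ = P * N := hPN
  have hDQ : D * (P * N) = P * N := by rw [← mul_assoc, hDP]
  have hQQ : (P * N) * (P * N) = P * (N * N) := by
    calc (P * N) * (P * N) = P * ((N * P) * N) := by simp only [mul_assoc]
      _ = P * ((P * N) * N) := by rw [hPN]
      _ = (P * P) * (N * N) := by simp only [mul_assoc]
      _ = P * (N * N) := by rw [hPP]
  have hB0 : P * N * F * N * P = (P * N) * (D * F * D) * (P * N) := by
    have h1 : (P * N) * (D * F * D) * (P * N) = ((P * N) * D) * F * (D * (P * N)) := by
      simp only [mul_assoc]
    rw [h1, hQD, hDQ]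
    have h2 : (P * N) * F * (P * N) = (P * N) * F * (N * P) := by rw [hPN]
    rw [h2]
    simp only [mul_assoc]
  have hTr1 : Matrix.trace ((P * N * F * N * P) ^ (2 * 2 ^ j))
      = Matrix.trace ((P * (N * N) * (D * F * D)) ^ (2 * 2 ^ j)) := by
    rw [hB0]
    calc Matrix.trace (((P * N) * (D * F * D) * (P * N)) ^ (2 * 2 ^ j))
        = Matrix.trace (((P * N) * ((D * F * D) * (P * N))) ^ (2 * 2 ^ j)) := by
          rw [mul_assoc]
      _ = Matrix.trace ((((D * F * D) * (P * N)) * (P * N)) ^ (2 * 2 ^ j)) :=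
          trace_pow_mul_comm _ _ _
      _ = Matrix.trace (((D * F * D) * ((P * N) * (P * N))) ^ (2 * 2 ^ j)) := by
          rw [mul_assoc]
      _ = Matrix.trace (((D * F * D) * (P * (N * N))) ^ (2 * 2 ^ j)) := by rw [hQQ]
      _ = Matrix.trace ((P * (N * N) * (D * F * D)) ^ (2 * 2 ^ j)) :=
          (trace_pow_mul_comm _ _ _).symm
  have hMain : Matrix.trace ((P * (N * N) * (D * F * D)) ^ (2 * 2 ^ j))
      ≤ Matrix.trace ((P * (N * N)) ^ (2 * 2 ^ j) * (D * F * D) ^ (2 * 2 ^ j)) := by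
    have h := (traceKL (j + 1)).1 (P * (N * N)) (D * F * D) hXt hGt
    rwa [show (2 : ℕ) ^ (j + 1) = 2 * 2 ^ j from pow_succ' 2 j] at h
  have hXpow : (P * (N * N)) ^ (2 * 2 ^ j) = P * N ^ (4 * 2 ^ j) := by
    have hcomm : Commute P (N * N) := hPNN.symm
    rw [hcomm.mul_pow]
    have hidem : IsIdempotentElem P := hPP
    have h1 : P ^ (2 * 2 ^ j) = P := by
      obtain ⟨e, he⟩ : ∃ e, 2 * 2 ^ j = e + 1 := ⟨2 * 2 ^ j - 1, by
        have : 0 < 2 * 2 ^ j := by positivity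
        omega⟩
      rw [he, hidem.pow_succ_eq]
    rw [h1, ← pow_two, ← pow_mul, show 2 * (2 * 2 ^ j) = 4 * 2 ^ j by ring]
  calc Matrix.trace ((P * N * F * N * P) ^ (2 * 2 ^ j))
      = Matrix.trace ((P * (N * N) * (D * F * D)) ^ (2 * 2 ^ j)) := hTr1
    _ ≤ Matrix.trace ((P * (N * N)) ^ (2 * 2 ^ j) * (D * F * D) ^ (2 * 2 ^ j)) := hMain
    _ = Matrix.trace (P * N ^ (4 * 2 ^ j) * (D * F * D) ^ (2 * 2 ^ j)) := by rw [hXpow]
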